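/- arXiv:0806.2357 — 3 statements merged into one kernel-verified Lean document; each statement's English description precedes it below -/
import Mathlib

section
/- For the Fourier matrix u on ℤ/nℤ, the complex dimension of the subspace {f : ZMod n × ZMod n → ℂ | C_u f = D_u f} (the eigenvalue-1 eigenspace of the Berezin transform) equals the number of pairs (r,s) ∈ (ZMod n)² with r*s = 0. -/
open Finset Matrix

/-- The symbol-to-operator map `C_u` as a complex-linear map. -/
noncomputable def CL {ι : Type*} [Fintype ι] (u : Matrix ι ι ℂ) :
    ((ι × ι) → ℂ) →ₗ[ℂ] Matrix ι ι ℂ where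
  toFun f := fun k k' => ∑ l, u k l * f (k, l) * (starRingEnd ℂ) (u k' l)
  map_add' f g := by
    funext k k'
    simp [mul_add, add_mul, Finset.sum_add_distrib]
    rfl
  map_smul' c f := by
    funext k k'
    simp only [Pi.smul_apply, smul_eq_mul, RingHom.id_apply, Matrix.smul_apply]
    change _ = c * ∑ l, u k l * f (k, l) * (starRingEnd ℂ) (u k' l)
    rw [Finset.mul_sum]
    exact Finset.sum_congr rfl fun l _ => by ring

/-- The symbol-to-operator map `D_u` as a complex-linear map. -/
noncomputable def DL {ι : Type*} [Fintype ι] (u : Matrix ι ι ℂ) :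
    ((ι × ι) → ℂ) →ₗ[ℂ] Matrix ι ι ℂ where
  toFun f := fun k k' => ∑ l, u k l * f (k', l) * (starRingEnd ℂ) (u k' l)
  map_add' f g := by
    funext k k'
    simp [mul_add, add_mul, Finset.sum_add_distrib]
    rfl
  map_smul' c f := by
    funext k k'
    simp only [Pi.smul_apply, smul_eq_mul, RingHom.id_apply, Matrix.smul_apply]
    change _ = c * ∑ l, u k l * f (k', l) * (starRingEnd ℂ) (u k' l)
    rw [Finset.mul_sum]
    exact Finset.sum_congr rfl fun l _ => by ring

namespace Stmt12Aux

set_option linter.unusedSectionVars false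

noncomputable def zet (n : ℕ) : ℂ := Complex.exp (2 * Real.pi * Complex.I / n)

variable {n : ℕ} [NeZero n] {ε : ZMod n → ℂ}

lemma hzet : IsPrimitiveRoot (zet n) n := Complex.isPrimitiveRoot_exp n (NeZero.ne n)

lemma zet_pow_mod (x : ℕ) : (zet n) ^ x = (zet n) ^ (x % n) := by
  conv_lhs => rw [← Nat.mod_add_div x n]
  rw [pow_add, pow_mul, (hzet (n := n)).pow_eq_one, one_pow, mul_one]

variable (hε : ∀ m : ZMod n, ε m = Complex.exp (2 * Real.pi * Complex.I * m.val / n))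
include hε

lemma eps_apply (m : ZMod n) : ε m = zet n ^ m.val := by
  rw [hε, zet, ← Complex.exp_nat_mul]
  congr 1
  ring

lemma eps_mul_eps (a b : ZMod n) : ε a * ε b = ε (a + b) := by
  rw [eps_apply hε a, eps_apply hε b, eps_apply hε (a + b), ZMod.val_add,
    ← zet_pow_mod, pow_add]

lemma eps_zero : ε 0 = 1 := by
  rw [eps_apply hε]
  simp

lemma eps_eq_one_iff (m : ZMod n) : ε m = 1 ↔ m = 0 := by
  rw [eps_apply hε]
  constructor
  · intro h
    rw [(hzet (n := n)).pow_eq_one_iff_dvd] at h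
    have := Nat.eq_zero_of_dvd_of_lt h (ZMod.val_lt m)
    exact (ZMod.val_eq_zero m).1 this
  · rintro rfl
    simp

lemma conj_eps (m : ZMod n) : (starRingEnd ℂ) (ε m) = ε (-m) := by
  have h1 : ε m * ε (-m) = 1 := by
    rw [eps_mul_eps hε, add_neg_cancel, eps_zero hε]
  have h2 : (starRingEnd ℂ) (ε m) * ε m = 1 := by
    rw [hε, ← Complex.exp_conj, ← Complex.exp_add]
    have hc : (starRingEnd ℂ) (2 * (Real.pi : ℂ) * Complex.I * (m.val : ℂ) / (n : ℂ))
        = -(2 * (Real.pi : ℂ) * Complex.I * (m.val : ℂ) / (n : ℂ)) := by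
      simp only [map_div₀, _root_.map_mul, Complex.conj_I, Complex.conj_ofReal,
        map_natCast, map_ofNat]
      ring
    rw [hc, neg_add_cancel, Complex.exp_zero]
  calc (starRingEnd ℂ) (ε m) = (starRingEnd ℂ) (ε m) * (ε m * ε (-m)) := by
        rw [h1, mul_one]
    _ = ((starRingEnd ℂ) (ε m) * ε m) * ε (-m) := by ring
    _ = ε (-m) := by rw [h2, one_mul]

lemma sum_eps (a : ZMod n) :
    ∑ l : ZMod n, ε (a * l) = if a = 0 then (n : ℂ) else 0 := by
  have key : ∀ l : ZMod n, ε (a * l) = (zet n ^ a.val) ^ l.val := by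
    intro l
    rw [eps_apply hε, ZMod.val_mul, ← zet_pow_mod, pow_mul]
  rw [Finset.sum_congr rfl fun l _ => key l]
  have hbij : ∑ l : ZMod n, (zet n ^ a.val) ^ l.val
      = ∑ j ∈ Finset.range n, (zet n ^ a.val) ^ j := by
    apply Finset.sum_nbij' (i := fun l : ZMod n => l.val) (j := fun j : ℕ => (j : ZMod n))
    · intro l _
      exact Finset.mem_range.2 (ZMod.val_lt l)
    · intro j _
      exact Finset.mem_univ _
    · intro l _
      simp [ZMod.natCast_val, ZMod.cast_id]
    · intro j hj
      exact ZMod.val_cast_of_lt (Finset.mem_range.1 hj)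
    · intro l _
      rfl
  rw [hbij]
  by_cases ha : a = 0
  · subst ha
    simp
  · rw [if_neg ha]
    have hne : zet n ^ a.val ≠ 1 := by
      intro h1
      rw [(hzet (n := n)).pow_eq_one_iff_dvd] at h1
      exact ha ((ZMod.val_eq_zero a).1 (Nat.eq_zero_of_dvd_of_lt h1 (ZMod.val_lt a)))
    rw [geom_sum_eq hne]
    have hpow : (zet n ^ a.val) ^ n = 1 := by
      rw [← pow_mul, mul_comm, pow_mul, (hzet (n := n)).pow_eq_one, one_pow]
    rw [hpow, sub_self, zero_div]

end Stmt12Aux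

namespace Stmt12Aux

set_option linter.unusedSectionVars false

/-- Fourier synthesis on symbols. -/
noncomputable def Phi {n : ℕ} [NeZero n] (ε : ZMod n → ℂ) :
    ((ZMod n × ZMod n) → ℂ) →ₗ[ℂ] ((ZMod n × ZMod n) → ℂ) where
  toFun g := fun p => ∑ q : ZMod n × ZMod n, g q * ε (q.1 * p.1 + q.2 * p.2)
  map_add' f g := by
    funext p
    simp [add_mul, Finset.sum_add_distrib]
  map_smul' c f := by
    funext p
    simp only [Pi.smul_apply, smul_eq_mul, RingHom.id_apply]
    rw [Finset.mul_sum]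
    exact Finset.sum_congr rfl fun q _ => by ring

/-- Synthesis into matrices using the shifted characters. -/
noncomputable def Theta {n : ℕ} [NeZero n] (ε : ZMod n → ℂ) :
    ((ZMod n × ZMod n) → ℂ) →ₗ[ℂ] Matrix (ZMod n) (ZMod n) ℂ where
  toFun g := fun k k' => ∑ r : ZMod n, g (r, k' - k) * ε (r * k)
  map_add' f g := by
    funext k k'
    simp [add_mul, Finset.sum_add_distrib]
    rfl
  map_smul' c f := by
    funext k k'
    simp only [Pi.smul_apply, smul_eq_mul, RingHom.id_apply, Matrix.smul_apply]
    change _ = c * ∑ r : ZMod n, f (r, k' - k) * ε (r * k)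
    rw [Finset.mul_sum]
    exact Finset.sum_congr rfl fun q _ => by ring

/-- The diagonal multiplier. -/
noncomputable def Dg {n : ℕ} [NeZero n] (ε : ZMod n → ℂ) :
    ((ZMod n × ZMod n) → ℂ) →ₗ[ℂ] ((ZMod n × ZMod n) → ℂ) where
  toFun g := fun q => (1 - ε (q.1 * q.2)) * g q
  map_add' f g := by
    funext q
    simp [mul_add]
  map_smul' c f := by
    funext q
    simp only [Pi.smul_apply, smul_eq_mul, RingHom.id_apply]
    ring

variable {n : ℕ} [NeZero n] {ε : ZMod n → ℂ}
  (hε : ∀ m : ZMod n, ε m = Complex.exp (2 * Real.pi * Complex.I * m.val / n))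

include hε

lemma Phi_ker : LinearMap.ker (Phi ε) = ⊥ := by
  rw [LinearMap.ker_eq_bot']
  intro g hg
  have hnc : ((n : ℂ)) ≠ 0 := Nat.cast_ne_zero.2 (NeZero.ne n)
  funext q
  have h0 : ∀ p : ZMod n × ZMod n,
      ∑ q' : ZMod n × ZMod n, g q' * ε (q'.1 * p.1 + q'.2 * p.2) = 0 := by
    intro p
    have := congrFun hg p
    simpa [Phi] using this
  have key : ∑ p : ZMod n × ZMod n,
      (∑ q' : ZMod n × ZMod n, g q' * ε (q'.1 * p.1 + q'.2 * p.2)) *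
        (ε (-(q.1 * p.1)) * ε (-(q.2 * p.2)))
      = (n : ℂ) * (n : ℂ) * g q := by
    have h1 : ∀ p : ZMod n × ZMod n,
        (∑ q' : ZMod n × ZMod n, g q' * ε (q'.1 * p.1 + q'.2 * p.2)) *
          (ε (-(q.1 * p.1)) * ε (-(q.2 * p.2)))
        = ∑ q' : ZMod n × ZMod n,
            g q' * (ε ((q'.1 - q.1) * p.1) * ε ((q'.2 - q.2) * p.2)) := by
      intro p
      rw [Finset.sum_mul]
      refine Finset.sum_congr rfl fun q' _ => ?_
      have e1 : ε (q'.1 * p.1 + q'.2 * p.2) * (ε (-(q.1 * p.1)) * ε (-(q.2 * p.2)))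
          = ε ((q'.1 - q.1) * p.1) * ε ((q'.2 - q.2) * p.2) := by
        simp only [eps_mul_eps hε]
        congr 1
        ring
      rw [mul_assoc, e1]
    rw [Finset.sum_congr rfl fun p _ => h1 p, Finset.sum_comm]
    have h2 : ∀ q' : ZMod n × ZMod n,
        ∑ p : ZMod n × ZMod n, g q' * (ε ((q'.1 - q.1) * p.1) * ε ((q'.2 - q.2) * p.2))
        = g q' * ((if q'.1 - q.1 = 0 then (n : ℂ) else 0) *
            (if q'.2 - q.2 = 0 then (n : ℂ) else 0)) := by
      intro q'
      rw [← Finset.mul_sum]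
      congr 1
      rw [Fintype.sum_prod_type]
      dsimp only
      rw [← Finset.sum_mul_sum, sum_eps hε, sum_eps hε]
    rw [Finset.sum_congr rfl fun q' _ => h2 q', Finset.sum_eq_single q]
    · simp
      ring
    · intro q' _ hne
      have hor : q'.1 - q.1 ≠ 0 ∨ q'.2 - q.2 ≠ 0 := by
        by_contra hcon
        push_neg at hcon
        exact hne (Prod.ext (sub_eq_zero.1 hcon.1) (sub_eq_zero.1 hcon.2))
      rcases hor with h | h
      · rw [if_neg h, zero_mul, mul_zero]
      · rw [if_neg h, mul_zero, mul_zero]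
    · intro h
      exact absurd (Finset.mem_univ q) h
  have hz : (n : ℂ) * (n : ℂ) * g q = 0 := by
    rw [← key]
    exact Finset.sum_eq_zero fun p _ => by rw [h0 p, zero_mul]
  have := mul_eq_zero.1 hz
  rcases this with h | h
  · exact absurd (mul_eq_zero.1 h) (by simp [hnc])
  · exact h

lemma Theta_ker : LinearMap.ker (Theta ε) = ⊥ := by
  rw [LinearMap.ker_eq_bot']
  intro g hg
  have hnc : ((n : ℂ)) ≠ 0 := Nat.cast_ne_zero.2 (NeZero.ne n)
  funext q
  have h0 : ∀ k k' : ZMod n, ∑ r : ZMod n, g (r, k' - k) * ε (r * k) = 0 := by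
    intro k k'
    have := congrFun (congrFun hg k) k'
    exact this
  have key : ∑ k : ZMod n, (∑ r : ZMod n, g (r, (k + q.2) - k) * ε (r * k)) * ε (-(q.1 * k))
      = (n : ℂ) * g q := by
    have h1 : ∀ k : ZMod n,
        (∑ r : ZMod n, g (r, (k + q.2) - k) * ε (r * k)) * ε (-(q.1 * k))
        = ∑ r : ZMod n, g (r, q.2) * ε ((r - q.1) * k) := by
      intro k
      rw [Finset.sum_mul]
      refine Finset.sum_congr rfl fun r _ => ?_
      rw [add_sub_cancel_left, mul_assoc, eps_mul_eps hε,
        show r * k + -(q.1 * k) = (r - q.1) * k from by ring]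
    rw [Finset.sum_congr rfl fun k _ => h1 k, Finset.sum_comm]
    have h2 : ∀ r : ZMod n, ∑ k : ZMod n, g (r, q.2) * ε ((r - q.1) * k)
        = g (r, q.2) * (if r - q.1 = 0 then (n : ℂ) else 0) := by
      intro r
      rw [← Finset.mul_sum, sum_eps hε]
    rw [Finset.sum_congr rfl fun r _ => h2 r, Finset.sum_eq_single q.1]
    · simp
      ring
    · intro r _ hne
      rw [if_neg (fun h => hne (sub_eq_zero.1 h)), mul_zero]
    · intro h
      exact absurd (Finset.mem_univ _) h
  have hz : (n : ℂ) * g q = 0 := by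
    rw [← key]
    exact Finset.sum_eq_zero fun k _ => by rw [h0 k (k + q.2), zero_mul]
  rcases mul_eq_zero.1 hz with h | h
  · exact absurd h hnc
  · exact h

variable {u : Matrix (ZMod n) (ZMod n) ℂ}
  (hu : ∀ k l, u k l = ε (k * l) / Real.sqrt n)

include hu

lemma inner_sum (c s k k' : ZMod n) :
    ∑ l : ZMod n, u k l * ε (c + s * l) * (starRingEnd ℂ) (u k' l)
      = if k + s - k' = 0 then ε c else 0 := by
  have hnc : ((n : ℂ)) ≠ 0 := Nat.cast_ne_zero.2 (NeZero.ne n)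
  have hsq : ((Real.sqrt n : ℂ)) * ((Real.sqrt n : ℂ)) = (n : ℂ) := by
    rw [← Complex.ofReal_mul, Real.mul_self_sqrt (Nat.cast_nonneg n)]
    norm_cast
  have step : ∀ l : ZMod n, u k l * ε (c + s * l) * (starRingEnd ℂ) (u k' l)
      = ε ((k + s - k') * l) * ε c / (n : ℂ) := by
    intro l
    rw [hu, hu, map_div₀, conj_eps hε, Complex.conj_ofReal]
    have key : ε (k * l) * ε (c + s * l) * ε (-(k' * l)) = ε ((k + s - k') * l) * ε c := by
      rw [eps_mul_eps hε, eps_mul_eps hε, eps_mul_eps hε]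
      congr 1
      ring
    calc ε (k * l) / (Real.sqrt n : ℂ) * ε (c + s * l) * (ε (-(k' * l)) / (Real.sqrt n : ℂ))
        = ε (k * l) * ε (c + s * l) * ε (-(k' * l)) /
            ((Real.sqrt n : ℂ) * (Real.sqrt n : ℂ)) := by ring
      _ = ε ((k + s - k') * l) * ε c / (n : ℂ) := by rw [hsq, key]
  rw [Finset.sum_congr rfl fun l _ => step l, ← Finset.sum_div, ← Finset.sum_mul,
    sum_eps hε (k + s - k')]
  by_cases h : k + s - k' = 0
  · rw [if_pos h, if_pos h, mul_comm, mul_div_assoc, div_self hnc, mul_one]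
  · rw [if_neg h, if_neg h, zero_mul, zero_div]

lemma comm_eq : (CL u - DL u) ∘ₗ Phi ε = Theta ε ∘ₗ Dg ε := by
  apply LinearMap.ext
  intro g
  funext k k'
  simp only [LinearMap.comp_apply, LinearMap.sub_apply, Matrix.sub_apply, CL, DL, Phi, Theta, Dg,
    LinearMap.coe_mk, AddHom.coe_mk]
  have expand : ∀ (a : ZMod n),
      ∑ l : ZMod n, u k l * (∑ q : ZMod n × ZMod n, g q * ε (q.1 * a + q.2 * l)) *
        (starRingEnd ℂ) (u k' l)
      = ∑ q : ZMod n × ZMod n, g q *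
          (if k + q.2 - k' = 0 then ε (q.1 * a) else 0) := by
    intro a
    have h1 : ∀ l : ZMod n, u k l * (∑ q : ZMod n × ZMod n, g q * ε (q.1 * a + q.2 * l)) *
        (starRingEnd ℂ) (u k' l)
        = ∑ q : ZMod n × ZMod n,
            g q * (u k l * ε (q.1 * a + q.2 * l) * (starRingEnd ℂ) (u k' l)) := by
      intro l
      rw [mul_assoc, Finset.sum_mul, Finset.mul_sum]
      exact Finset.sum_congr rfl fun q _ => by ring
    rw [Finset.sum_congr rfl fun l _ => h1 l, Finset.sum_comm]
    refine Finset.sum_congr rfl fun q _ => ?_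
    rw [← Finset.mul_sum, inner_sum hε hu (q.1 * a) q.2 k k']
  show (∑ l, u k l * (∑ q : ZMod n × ZMod n, g q * ε (q.1 * k + q.2 * l)) * (starRingEnd ℂ) (u k' l))
      - (∑ l, u k l * (∑ q : ZMod n × ZMod n, g q * ε (q.1 * k' + q.2 * l)) * (starRingEnd ℂ) (u k' l))
      = ∑ r : ZMod n, (1 - ε (r * (k' - k))) * g (r, k' - k) * ε (r * k)
  rw [expand k, expand k', ← Finset.sum_sub_distrib, Fintype.sum_prod_type]
  refine Finset.sum_congr rfl fun r _ => ?_
  rw [Finset.sum_eq_single (k' - k)]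
  · have hcond : k + (k' - k) - k' = 0 := by ring
    rw [if_pos hcond, if_pos hcond]
    have hx : ε (r * (k' - k)) * ε (r * k) = ε (r * k') := by
      rw [eps_mul_eps hε]
      congr 1
      ring
    linear_combination g (r, k' - k) * hx
  · intro s _ hs
    have hc : ¬(k + s - k' = 0) := fun h => hs (by linear_combination h)
    rw [if_neg hc, if_neg hc, sub_self]
  · intro h
    exact absurd (Finset.mem_univ _) h

end Stmt12Aux

/-- for the Fourier matrix `u k l = ε(k·l)/√n` on `ℤ/nℤ`, the complex dimension
of the eigenvalue-1 eigenspace `{f | C_u f = D_u f}` of the Berezin transform equals the number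
of pairs `(r,s)` in `ℤ/nℤ × ℤ/nℤ` with `r·s = 0`. -/
theorem stmt12 (n : ℕ) [NeZero n] (hn : 1 ≤ n)
    (ε : ZMod n → ℂ)
    (hε : ∀ m : ZMod n, ε m = Complex.exp (2 * Real.pi * Complex.I * m.val / n))
    (u : Matrix (ZMod n) (ZMod n) ℂ)
    (hu : ∀ k l, u k l = ε (k * l) / Real.sqrt n) :
    Module.finrank ℂ ↥(LinearMap.ker (CL u - DL u)) =
      (Finset.univ.filter fun p : ZMod n × ZMod n => p.1 * p.2 = 0).card := by
  have hTk : LinearMap.ker ((CL u - DL u) ∘ₗ Stmt12Aux.Phi ε) = LinearMap.ker (Stmt12Aux.Dg ε) := by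
    rw [Stmt12Aux.comm_eq hε hu, LinearMap.ker_comp,
      Stmt12Aux.Theta_ker hε, Submodule.comap_bot]
  rw [LinearMap.ker_comp] at hTk
  have hPhiInj : Function.Injective (Stmt12Aux.Phi (n := n) ε) :=
    LinearMap.ker_eq_bot.1 (Stmt12Aux.Phi_ker hε)
  have hPhiSurj : Function.Surjective (Stmt12Aux.Phi (n := n) ε) :=
    (LinearMap.injective_iff_surjective).1 hPhiInj
  let Pe : ((ZMod n × ZMod n) → ℂ) ≃ₗ[ℂ] ((ZMod n × ZMod n) → ℂ) :=
    LinearEquiv.ofBijective _ ⟨hPhiInj, hPhiSurj⟩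
  have hPe : (Pe : ((ZMod n × ZMod n) → ℂ) →ₗ[ℂ] ((ZMod n × ZMod n) → ℂ)) = Stmt12Aux.Phi ε := rfl
  have hfr : Module.finrank ℂ ↥(LinearMap.ker (CL u - DL u))
      = Module.finrank ℂ ↥(LinearMap.ker (Stmt12Aux.Dg ε)) := by
    rw [← hTk, ← hPe, Submodule.comap_equiv_eq_map_symm]
    exact (LinearEquiv.finrank_map_eq Pe.symm _).symm
  rw [hfr]
  have heqone : ∀ q : ZMod n × ZMod n, (1 - ε (q.1 * q.2) = 0) ↔ q.1 * q.2 = 0 := by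
    intro q
    rw [sub_eq_zero, eq_comm, Stmt12Aux.eps_eq_one_iff hε]
  let e : ↥(LinearMap.ker (Stmt12Aux.Dg ε)) ≃ₗ[ℂ]
      ({q : ZMod n × ZMod n // q.1 * q.2 = 0} → ℂ) :=
  { toFun := fun g q => g.1 q.1
    map_add' := fun f g => rfl
    map_smul' := fun c f => rfl
    invFun := fun h => ⟨fun q => if hq : q.1 * q.2 = 0 then h ⟨q, hq⟩ else 0, by
      rw [LinearMap.mem_ker]
      funext q
      show (1 - ε (q.1 * q.2)) * (if hq : q.1 * q.2 = 0 then h ⟨q, hq⟩ else 0) = 0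
      split_ifs with hq
      · have h1 : (1 : ℂ) - ε (q.1 * q.2) = 0 := by
          rw [hq, Stmt12Aux.eps_zero hε, sub_self]
        rw [h1, zero_mul]
      · rw [mul_zero]⟩
    left_inv := fun g => by
      apply Subtype.ext
      funext q
      show (if hq : q.1 * q.2 = 0 then g.1 q else 0) = g.1 q
      by_cases hq : q.1 * q.2 = 0
      · exact dif_pos hq
      · rw [dif_neg hq]
        have hm := g.2
        rw [LinearMap.mem_ker] at hm
        have h2 : (1 - ε (q.1 * q.2)) * g.1 q = 0 := congrFun hm q
        rcases mul_eq_zero.1 h2 with h | h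
        · exact absurd ((heqone q).1 h) hq
        · exact h.symm
    right_inv := fun h => by
      funext q
      exact dif_pos q.2 }
  rw [e.finrank_eq, Module.finrank_fintype_fun_eq_card, Fintype.card_subtype]
end

section
/- Let θ ∈ ℂ with |θ| = 1, θ ≠ 1, θ ≠ -1, and let u be the n×n matrix with u k l = (if k = l then 1 else 0) + (θ - 1)/n. Then the complex dimension of the subspace {f : Fin n × Fin n → ℂ | C_u f = D_u f} (the eigenvalue-1 eigenspace of the Berezin transform I_u) equals exactly 2n - 1. -/
open Finset Matrix

noncomputable def Smap (n : ℕ) : ((Fin n × Fin n) → ℂ) →ₗ[ℂ] ((Fin n → ℂ) × (Fin n → ℂ)) where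
  toFun f := (fun k => f (k, k), fun k => ∑ l, f (k, l))
  map_add' f g := by
    ext k <;> simp [Finset.sum_add_distrib]
  map_smul' c f := by
    ext k <;> simp [Finset.mul_sum]

noncomputable def Rmap (n : ℕ) : ((Fin n → ℂ) × (Fin n → ℂ)) →ₗ[ℂ] ((Fin n × Fin n) → ℂ) where
  toFun p := fun kl => p.1 kl.2 + (p.2 kl.1 - p.2 kl.2) / (n : ℂ)
  map_add' p q := by
    funext kl; simp; ring
  map_smul' c p := by
    funext kl; simp; ring

noncomputable def psimap (n : ℕ) : ((Fin n → ℂ) × (Fin n → ℂ)) →ₗ[ℂ] ℂ where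
  toFun p := (∑ k, p.2 k) - (n : ℂ) * ∑ k, p.1 k
  map_add' p q := by simp [Finset.sum_add_distrib]; ring
  map_smul' c p := by
    simp only [Prod.smul_snd, Prod.smul_fst, Pi.smul_apply, smul_eq_mul, RingHom.id_apply]
    rw [← Finset.mul_sum, ← Finset.mul_sum]; ring

/-- for the unitary matrix `u k l = δ_{kl} + (θ - 1)/n` with `|θ| = 1`,
`θ ≠ ±1`, the eigenvalue-1 eigenspace `{f | C_u f = D_u f}` of the Berezin transform `I_u`
has complex dimension exactly `2n - 1`. -/
theorem stmt17 (n : ℕ) (hn : 1 ≤ n) (θ : ℂ)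
    (hθ : ‖θ‖ = 1) (hθ1 : θ ≠ 1) (hθ2 : θ ≠ -1)
    (u : Matrix (Fin n) (Fin n) ℂ)
    (hu : ∀ k l, u k l = (if k = l then 1 else 0) + (θ - 1) / (n : ℂ)) :
    Module.finrank ℂ ↥(LinearMap.ker (CL u - DL u)) = 2 * n - 1 := by
  have hn0 : (n : ℂ) ≠ 0 := Nat.cast_ne_zero.mpr (by omega)
  set α : ℂ := (θ - 1) / (n : ℂ) with hα
  set β : ℂ := (starRingEnd ℂ) α with hβdef
  have hθconj : θ * (starRingEnd ℂ) θ = 1 := by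
    rw [Complex.mul_conj]; norm_cast; rw [Complex.normSq_eq_norm_sq, hθ]; norm_num
  have hθ0 : θ ≠ 0 := by
    intro h; rw [h] at hθconj; simp at hθconj
  have hβ : β = ((starRingEnd ℂ) θ - 1) / (n : ℂ) := by
    rw [hβdef, hα]; simp [map_div₀]
  have hrel : α + β + (n : ℂ) * α * β = 0 := by
    rw [hβ, hα]
    field_simp
    linear_combination hθconj
  have hαβ : α ≠ β := by
    intro h
    have hc : (starRingEnd ℂ) θ = θ := by
      rw [hβ, hα] at h
      field_simp at h
      linear_combination -h
    have h2 : θ * θ = 1 := by rw [← hθconj, hc]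
    rcases mul_self_eq_one_iff.mp h2 with h1 | h1
    · exact hθ1 h1
    · exact hθ2 h1
  have hα0 : α ≠ 0 := div_ne_zero (sub_ne_zero.mpr hθ1) hn0
  have hβ0 : β ≠ 0 := by rw [hβdef]; exact fun h => hα0 (by simpa using congrArg (starRingEnd ℂ) h)
  have hsum0 : α + β ≠ 0 := by
    intro h
    have h4 : (n : ℂ) * α * β = 0 := by linear_combination hrel - h
    rcases mul_eq_zero.mp h4 with h1 | h1
    · rcases mul_eq_zero.mp h1 with h2 | h2
      · exact hn0 h2
      · exact hα0 h2
    · exact hβ0 h1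
  have hdiff0 : α - β ≠ 0 := sub_ne_zero.mpr hαβ
  have hrel' : α / n + β / n + α * β = 0 := by
    have h4 : α / n + β / n + α * β = (α + β + (n:ℂ) * α * β) / n := by field_simp
    rw [h4, hrel, zero_div]
  have hcu : ∀ k l : Fin n, (starRingEnd ℂ) (u k l) = (if k = l then 1 else 0) + β := by
    intro k l; rw [hu]; simp [apply_ite, hβdef]
  clear_value α β
  have hentry : ∀ (h : Fin n → ℂ) (k k' : Fin n),
      ∑ l, u k l * h l * (starRingEnd ℂ) (u k' l) =
        (if k' = k then h k else 0) + β * h k + α * h k' + α * β * ∑ l, h l := by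
    intro h k k'
    have step : ∀ l, u k l * h l * (starRingEnd ℂ) (u k' l) =
        (if k = l then (if k' = l then h l else 0) else 0) +
        (if k = l then β * h l else 0) + (if k' = l then α * h l else 0) + α * β * h l := by
      intro l
      rw [hu, hcu]
      by_cases h1 : k = l <;> by_cases h2 : k' = l <;> simp [h1, h2] <;> ring
    rw [Finset.sum_congr rfl fun l _ => step l]
    rw [Finset.sum_add_distrib, Finset.sum_add_distrib, Finset.sum_add_distrib]
    rw [Finset.sum_ite_eq, Finset.sum_ite_eq, Finset.sum_ite_eq, ← Finset.mul_sum]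
    simp only [Finset.mem_univ, if_true]
  have hker : ∀ f : (Fin n × Fin n) → ℂ, (CL u - DL u) f = 0 ↔
      ∀ k k' : Fin n,
        β * f (k, k) + α * f (k, k') + α * β * ∑ l, f (k, l) =
        β * f (k', k) + α * f (k', k') + α * β * ∑ l, f (k', l) := by
    intro f
    constructor
    · intro h k k'
      have h0 : ((CL u - DL u) f) k k' = 0 := by rw [h]; rfl
      simp only [LinearMap.sub_apply, CL, DL, LinearMap.coe_mk, AddHom.coe_mk,
        Matrix.sub_apply] at h0
      change (∑ l, u k l * f (k, l) * (starRingEnd ℂ) (u k' l)) - (∑ l, u k l * f (k', l) * (starRingEnd ℂ) (u k' l)) = 0 at h0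
      rw [hentry (fun l => f (k, l)) k k', hentry (fun l => f (k', l)) k k'] at h0
      by_cases h3 : k' = k
      · subst h3; rfl
      · simp only [h3, if_false] at h0
        linear_combination h0
    · intro h
      funext k k'
      show (((CL u) f) k k' - ((DL u) f) k k') = 0
      simp only [CL, DL, LinearMap.coe_mk, AddHom.coe_mk]
      change (∑ l, u k l * f (k, l) * (starRingEnd ℂ) (u k' l)) - (∑ l, u k l * f (k', l) * (starRingEnd ℂ) (u k' l)) = 0
      rw [hentry (fun l => f (k, l)) k k', hentry (fun l => f (k', l)) k k']
      by_cases h3 : k' = k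
      · subst h3
        linear_combination h k' k'
      · simp only [h3, if_false]
        linear_combination h k k'
  -- row-sum identity for reconstructed functions
  have hrow : ∀ p : (Fin n → ℂ) × (Fin n → ℂ), psimap n p = 0 →
      ∀ k, ∑ l, (p.1 l + (p.2 k - p.2 l) / (n : ℂ)) = p.2 k := by
    intro p hp k
    have hc : ∑ l, p.2 l = (n : ℂ) * ∑ l, p.1 l := by
      have := hp
      simp only [psimap, LinearMap.coe_mk, AddHom.coe_mk] at this
      linear_combination this
    rw [Finset.sum_add_distrib, ← Finset.sum_div, Finset.sum_sub_distrib, Finset.sum_const,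
      card_univ, Fintype.card_fin, nsmul_eq_mul, hc]
    field_simp
    ring
  -- S maps ker M into ker psi
  have hS : ∀ f ∈ LinearMap.ker (CL u - DL u), Smap n f ∈ LinearMap.ker (psimap n) := by
    intro f hf
    have heq := (hker f).mp hf
    have hdsum : ∀ k : Fin n,
        ∑ k' : Fin n, (β * f (k, k) + α * f (k, k') + α * β * ∑ l, f (k, l)) =
          (n : ℂ) * (β * f (k, k)) + α * (∑ l, f (k, l)) + (n : ℂ) * (α * β * ∑ l, f (k, l)) := by
      intro k
      rw [Finset.sum_add_distrib, Finset.sum_add_distrib, Finset.sum_const, Finset.sum_const,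
        ← Finset.mul_sum]
      simp [card_univ, nsmul_eq_mul]
    have hdsum2 : ∀ k : Fin n,
        ∑ k' : Fin n, (β * f (k', k) + α * f (k', k') + α * β * ∑ l, f (k', l)) =
          β * (∑ k', f (k', k)) + α * (∑ k', f (k', k')) +
            α * β * ∑ k', ∑ l, f (k', l) := by
      intro k
      rw [Finset.sum_add_distrib, Finset.sum_add_distrib, ← Finset.mul_sum, ← Finset.mul_sum,
        ← Finset.mul_sum]
    have hbig : ∑ k : Fin n, ((n : ℂ) * (β * f (k, k)) + α * (∑ l, f (k, l)) +
        (n : ℂ) * (α * β * ∑ l, f (k, l))) =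
        ∑ k : Fin n, (β * (∑ k', f (k', k)) + α * (∑ k', f (k', k')) +
          α * β * ∑ k', ∑ l, f (k', l)) := by
      calc _ = ∑ k, ∑ k', (β * f (k, k) + α * f (k, k') + α * β * ∑ l, f (k, l)) :=
              (Finset.sum_congr rfl fun k _ => (hdsum k).symm)
        _ = ∑ k, ∑ k', (β * f (k', k) + α * f (k', k') + α * β * ∑ l, f (k', l)) :=
              Finset.sum_congr rfl fun k _ => Finset.sum_congr rfl fun k' _ => heq k k'
        _ = _ := Finset.sum_congr rfl fun k _ => hdsum2 k
    have hswap : ∑ k : Fin n, ∑ k' : Fin n, f (k', k) = ∑ k : Fin n, ∑ l, f (k, l) :=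
      by rw [Finset.sum_comm]
    have hbig2 : (n : ℂ) * β * (∑ k : Fin n, f (k, k)) + α * (∑ k : Fin n, ∑ l, f (k, l)) +
        (n:ℂ) * α * β * (∑ k : Fin n, ∑ l, f (k, l)) =
        β * (∑ k : Fin n, ∑ l, f (k, l)) + (n : ℂ) * α * (∑ k : Fin n, f (k, k)) +
        (n:ℂ) * (α * β * (∑ k : Fin n, ∑ l, f (k, l))) := by
      have e1 : ∑ k : Fin n, ((n : ℂ) * (β * f (k, k)) + α * (∑ l, f (k, l)) +
          (n : ℂ) * (α * β * ∑ l, f (k, l))) =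
          (n:ℂ) * β * (∑ k : Fin n, f (k, k)) + α * (∑ k : Fin n, ∑ l, f (k, l)) +
            (n:ℂ) * α * β * (∑ k : Fin n, ∑ l, f (k, l)) := by
        rw [Finset.sum_add_distrib, Finset.sum_add_distrib]
        simp only [← Finset.mul_sum]
        ring
      have e2 : ∑ k : Fin n, (β * (∑ k', f (k', k)) + α * (∑ k', f (k', k')) +
          α * β * ∑ k', ∑ l, f (k', l)) =
          β * (∑ k : Fin n, ∑ l, f (k, l)) + (n : ℂ) * α * (∑ k : Fin n, f (k, k)) +
            (n:ℂ) * (α * β * (∑ k : Fin n, ∑ l, f (k, l))) := by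
        rw [Finset.sum_add_distrib, Finset.sum_add_distrib, ← Finset.mul_sum, hswap,
          Finset.sum_const, Finset.sum_const]
        simp only [card_univ, Fintype.card_fin, nsmul_eq_mul]
        ring
      rw [← e1, ← e2, hbig]
    have hGD : (∑ k : Fin n, ∑ l, f (k, l)) = (n : ℂ) * ∑ k : Fin n, f (k, k) := by
      have h2 : (β - α) * ((n:ℂ) * (∑ k : Fin n, f (k, k)) - ∑ k : Fin n, ∑ l, f (k, l)) = 0 := by
        linear_combination hbig2
      rcases mul_eq_zero.mp h2 with h3 | h3
      · exact absurd (sub_eq_zero.mp h3).symm hαβ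
      · linear_combination -h3
    simp only [LinearMap.mem_ker, psimap, Smap, LinearMap.coe_mk, AddHom.coe_mk]
    linear_combination hGD
  -- R maps ker psi into ker M
  have hR : ∀ p ∈ LinearMap.ker (psimap n), Rmap n p ∈ LinearMap.ker (CL u - DL u) := by
    intro p hp
    rw [LinearMap.mem_ker, hker]
    intro k k'
    simp only [Rmap, LinearMap.coe_mk, AddHom.coe_mk]
    rw [hrow p hp k, hrow p hp k']
    linear_combination (p.2 k - p.2 k') * hrel'
  -- R ∘ S = id on ker M
  have hRS : ∀ f ∈ LinearMap.ker (CL u - DL u), Rmap n (Smap n f) = f := by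
    intro f hf
    have heq := (hker f).mp hf
    funext kl
    obtain ⟨k, l⟩ := kl
    simp only [Rmap, Smap, LinearMap.coe_mk, AddHom.coe_mk]
    have hA := heq k l
    have hB := heq l k
    have hsq : (α ^ 2 - β ^ 2) * (n : ℂ) ≠ 0 := by
      apply mul_ne_zero _ hn0
      have : α ^ 2 - β ^ 2 = (α + β) * (α - β) := by ring
      rw [this]
      exact mul_ne_zero hsum0 hdiff0
    have hx : (α ^ 2 - β ^ 2) * (n : ℂ) * f (k, l) =
        (α ^ 2 - β ^ 2) * (n : ℂ) * f (l, l) +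
          (α ^ 2 - β ^ 2) * ((∑ m, f (k, m)) - ∑ m, f (l, m)) := by
      linear_combination (n : ℂ) * α * hA + (n : ℂ) * β * hB -
        ((α - β) * ((∑ m, f (k, m)) - ∑ m, f (l, m))) * hrel
    have h5 : (α ^ 2 - β ^ 2) * (n : ℂ) *
        (f (l, l) + ((∑ m, f (k, m)) - ∑ m, f (l, m)) / (n : ℂ)) =
        (α ^ 2 - β ^ 2) * (n : ℂ) * f (k, l) := by
      have hn' : (n : ℂ) * (((∑ m, f (k, m)) - ∑ m, f (l, m)) / (n : ℂ)) =
          (∑ m, f (k, m)) - ∑ m, f (l, m) := by field_simp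
      linear_combination -hx + (α ^ 2 - β ^ 2) * hn'
    exact mul_left_cancel₀ hsq h5
  -- S ∘ R = id on ker psi
  have hSR : ∀ p ∈ LinearMap.ker (psimap n), Smap n (Rmap n p) = p := by
    intro p hp
    have hp0 : psimap n p = 0 := hp
    apply Prod.ext
    · funext k
      simp [Smap, Rmap]
    · funext k
      simp only [Smap, Rmap, LinearMap.coe_mk, AddHom.coe_mk]
      exact hrow p hp0 k
  -- the linear equivalence
  let S' : (LinearMap.ker (CL u - DL u)) →ₗ[ℂ] (LinearMap.ker (psimap n)) :=
    (Smap n).restrict hS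
  let R' : (LinearMap.ker (psimap n)) →ₗ[ℂ] (LinearMap.ker (CL u - DL u)) :=
    (Rmap n).restrict hR
  let e : (LinearMap.ker (CL u - DL u)) ≃ₗ[ℂ] (LinearMap.ker (psimap n)) :=
    LinearEquiv.ofLinear S' R'
      (by
        apply LinearMap.ext
        rintro ⟨p, hp⟩
        apply Subtype.ext
        simp only [LinearMap.comp_apply, LinearMap.restrict_apply, LinearMap.id_apply, S', R']
        exact hSR p hp)
      (by
        apply LinearMap.ext
        rintro ⟨f, hf⟩
        apply Subtype.ext
        simp only [LinearMap.comp_apply, LinearMap.restrict_apply, LinearMap.id_apply, S', R']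
        exact hRS f hf)
  rw [e.finrank_eq]
  -- dimension count
  have hsurj : Function.Surjective (psimap n) := by
    intro c
    refine ⟨(0, fun _ => c / (n : ℂ)), ?_⟩
    simp only [psimap, LinearMap.coe_mk, AddHom.coe_mk, Pi.zero_apply, Finset.sum_const,
      card_univ, Fintype.card_fin, nsmul_eq_mul, mul_zero, sub_zero, smul_eq_mul]
    field_simp
  have hr := LinearMap.finrank_range_add_finrank_ker (psimap n)
  rw [LinearMap.range_eq_top.mpr hsurj] at hr
  have hdom : Module.finrank ℂ ((Fin n → ℂ) × (Fin n → ℂ)) = n + n := by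
    simp [Module.finrank_prod, Module.finrank_fin_fun]
  rw [hdom] at hr
  simp only [finrank_top, Module.finrank_self] at hr
  omega
end

section
/- The real dimension of the kernel of the tangent map of μ equals the multiplicity of the eigenvalue 1 of the Berezin transform: the real vector space {v : n×n complex matrices | v * uᴴ + u * vᴴ = 0 and Re(v k l * conj (u k l)) = 0 for all k, l} has real dimension equal to the complex dimension of the subspace {f : Fin n × Fin n → ℂ | C_u f = D_u f}. -/
open Finset Matrix

/-- The real-linear map whose kernel is the tangent space at `u` to the unitary group,
`v ↦ v * uᴴ + u * vᴴ`. -/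
noncomputable def tanU {ι : Type*} [Fintype ι] [DecidableEq ι] (u : Matrix ι ι ℂ) :
    Matrix ι ι ℂ →ₗ[ℝ] Matrix ι ι ℂ where
  toFun v := v * uᴴ + u * vᴴ
  map_add' v w := by
    simp [Matrix.add_mul, Matrix.mul_add, Matrix.conjTranspose_add]
    abel
  map_smul' c v := by
    simp [Matrix.smul_mul, Matrix.mul_smul, smul_add]

/-- The real-linear tangent map of `μ : (u k l) ↦ (|u k l|²)` at `u` (up to a factor of 2),
`v ↦ ((k,l) ↦ Re (v k l * conj (u k l)))`. -/
noncomputable def tanMu {ι : Type*} [Fintype ι] (u : Matrix ι ι ℂ) :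
    Matrix ι ι ℂ →ₗ[ℝ] (ι × ι → ℝ) where
  toFun v := fun p => (v p.1 p.2 * (starRingEnd ℂ) (u p.1 p.2)).re
  map_add' v w := by
    funext p
    simp [Matrix.add_apply, add_mul]
  map_smul' c v := by
    funext p
    simp [Matrix.smul_apply, Complex.real_smul, Complex.ofReal_mul, mul_assoc]

namespace Stmt18

variable {n : ℕ} (u : Matrix (Fin n) (Fin n) ℂ)

/-- Coercion of real-valued functions to complex-valued, as an `ℝ`-linear map. -/
noncomputable def toC : ((Fin n × Fin n) → ℝ) →ₗ[ℝ] ((Fin n × Fin n) → ℂ) where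
  toFun t := fun p => (t p : ℂ)
  map_add' t s := by funext p; push_cast; simp
  map_smul' c t := by funext p; simp [Complex.real_smul]

/-- `CL u - DL u` restricted to a real-linear map. -/
noncomputable def E : ((Fin n × Fin n) → ℂ) →ₗ[ℝ] Matrix (Fin n) (Fin n) ℂ :=
  (CL u - DL u).restrictScalars ℝ

lemma E_apply (f : (Fin n × Fin n) → ℂ) (k k' : Fin n) :
    E u f k k' = ∑ l, u k l * (f (k, l) - f (k', l)) * (starRingEnd ℂ) (u k' l) := by
  change (∑ l, u k l * f (k, l) * (starRingEnd ℂ) (u k' l))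
    - (∑ l, u k l * f (k', l) * (starRingEnd ℂ) (u k' l)) = _
  simp only [E, LinearMap.restrictScalars_apply, LinearMap.sub_apply, CL, DL,
    LinearMap.coe_mk, AddHom.coe_mk, Matrix.sub_apply, ← Finset.sum_sub_distrib]
  exact Finset.sum_congr rfl fun l _ => by ring

lemma E_star {f : (Fin n × Fin n) → ℂ} (hf : E u f = 0) :
    E u (fun p => (starRingEnd ℂ) (f p)) = 0 := by
  funext k k'
  have h : ∑ l, u k' l * (f (k', l) - f (k, l)) * (starRingEnd ℂ) (u k l) = 0 := by
    have h0 := congrFun (congrFun hf k') k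
    simpa [E_apply] using h0
  rw [E_apply, Matrix.zero_apply]
  rw [← star_eq_zero]
  have key : star (∑ l, u k l * ((starRingEnd ℂ) (f (k, l)) - (starRingEnd ℂ) (f (k', l)))
      * (starRingEnd ℂ) (u k' l))
      = - ∑ l, u k' l * (f (k', l) - f (k, l)) * (starRingEnd ℂ) (u k l) := by
    rw [star_sum, ← Finset.sum_neg_distrib]
    refine Finset.sum_congr rfl fun l _ => ?_
    simp only [star_mul', star_sub, Complex.star_def, Complex.conj_conj]
    ring
  rw [key, h, neg_zero]

/-- The Berezin kernel condition on real-valued functions. -/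
noncomputable def Tru : ((Fin n × Fin n) → ℝ) →ₗ[ℝ] Matrix (Fin n) (Fin n) ℂ :=
  (E u).comp (toC)

lemma mem_ker_Tru {t : (Fin n × Fin n) → ℝ} :
    t ∈ LinearMap.ker (Tru u) ↔ (CL u - DL u) (fun p => (t p : ℂ)) = 0 := by
  simp only [Tru, LinearMap.mem_ker, LinearMap.comp_apply, E,
    LinearMap.restrictScalars_apply]
  rfl

/-- map from real symbols to tangent vectors -/
noncomputable def Psi : ((Fin n × Fin n) → ℝ) →ₗ[ℝ] Matrix (Fin n) (Fin n) ℂ where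
  toFun t := fun k l => Complex.I * (t (k, l) : ℂ) * u k l
  map_add' t s := by funext k l; change Complex.I * ((t + s) (k, l) : ℂ) * u k l = Complex.I * (t (k, l) : ℂ) * u k l + Complex.I * (s (k, l) : ℂ) * u k l; simp only [Pi.add_apply, Matrix.add_apply]; push_cast; ring
  map_smul' c t := by
    funext k l
    change Complex.I * ((c • t) (k, l) : ℂ) * u k l = c • (Complex.I * (t (k, l) : ℂ) * u k l)
    simp only [Pi.smul_apply, smul_eq_mul, RingHom.id_apply, Matrix.smul_apply,
      Complex.real_smul, Complex.ofReal_mul]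
    ring

lemma Psi_apply (t : (Fin n × Fin n) → ℝ) (k l : Fin n) :
    Psi u t k l = Complex.I * (t (k, l) : ℂ) * u k l := rfl

/-- map from tangent vectors to real symbols -/
noncomputable def Phi : Matrix (Fin n) (Fin n) ℂ →ₗ[ℝ] ((Fin n × Fin n) → ℝ) where
  toFun v := fun p => (v p.1 p.2 * (starRingEnd ℂ) (u p.1 p.2)).im / Complex.normSq (u p.1 p.2)
  map_add' v w := by
    funext p
    simp [Matrix.add_apply, add_mul, add_div]
  map_smul' c v := by
    funext p
    simp only [Matrix.smul_apply, Pi.smul_apply, smul_eq_mul, RingHom.id_apply,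
      Complex.real_smul]
    simp [Complex.mul_im]
    ring

lemma tanU_Psi (t : (Fin n × Fin n) → ℝ) :
    tanU u (Psi u t) = Complex.I • (Tru u t) := by
  funext k k'
  simp only [tanU, LinearMap.coe_mk, AddHom.coe_mk, Matrix.add_apply, Matrix.mul_apply,
    Matrix.conjTranspose_apply, Matrix.smul_apply, Tru, LinearMap.comp_apply, toC,
    Psi_apply, E_apply, smul_eq_mul, Finset.mul_sum, ← Finset.sum_add_distrib]
  refine Finset.sum_congr rfl fun l _ => ?_
  simp only [Complex.star_def, _root_.map_mul, Complex.conj_I, Complex.conj_ofReal]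
  ring

lemma Psi_Phi (v : Matrix (Fin n) (Fin n) ℂ) (hne : ∀ k l, u k l ≠ 0)
    (hv : v ∈ LinearMap.ker (tanMu u)) : Psi u (Phi u v) = v := by
  funext k l
  have h0 : (v k l * (starRingEnd ℂ) (u k l)).re = 0 :=
    congrFun (LinearMap.mem_ker.mp hv) (k, l)
  have hw : (Complex.normSq (u k l) : ℂ) ≠ 0 := by
    exact_mod_cast (Complex.normSq_pos.mpr (hne k l)).ne'
  have hz : v k l * (starRingEnd ℂ) (u k l)
      = ((v k l * (starRingEnd ℂ) (u k l)).im : ℂ) * Complex.I := by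
    conv_lhs => rw [← Complex.re_add_im (v k l * (starRingEnd ℂ) (u k l))]
    rw [h0]
    simp
  have hmc : (starRingEnd ℂ) (u k l) * u k l = (Complex.normSq (u k l) : ℂ) := by
    rw [mul_comm, Complex.mul_conj]
  have key : v k l * (Complex.normSq (u k l) : ℂ)
      = ((v k l * (starRingEnd ℂ) (u k l)).im : ℂ) * Complex.I * u k l := by
    rw [← hmc, ← mul_assoc]
    exact congrArg (· * u k l) hz
  simp only [Psi_apply, LinearMap.coe_mk, AddHom.coe_mk, Phi, Complex.ofReal_div]
  refine mul_right_cancel₀ hw ?_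
  rw [key]
  have hcan : (((v k l * (starRingEnd ℂ) (u k l)).im : ℂ) / (Complex.normSq (u k l) : ℂ))
      * (Complex.normSq (u k l) : ℂ) = ((v k l * (starRingEnd ℂ) (u k l)).im : ℂ) :=
    div_mul_cancel₀ _ hw
  linear_combination Complex.I * u k l * hcan

lemma Phi_Psi (hne : ∀ k l, u k l ≠ 0) (t : (Fin n × Fin n) → ℝ) : Phi u (Psi u t) = t := by
  funext p
  have hw : Complex.normSq (u p.1 p.2) ≠ 0 := (Complex.normSq_pos.mpr (hne p.1 p.2)).ne'
  simp only [Phi, Psi_apply, LinearMap.coe_mk, AddHom.coe_mk]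
  rw [mul_assoc, Complex.mul_conj]
  simp [Complex.mul_im]
  field_simp

lemma tanMu_Psi (t : (Fin n × Fin n) → ℝ) : Psi u t ∈ LinearMap.ker (tanMu u) := by
  rw [LinearMap.mem_ker]
  funext p
  simp only [tanMu, Psi_apply, LinearMap.coe_mk, AddHom.coe_mk, Pi.zero_apply]
  rw [mul_assoc, Complex.mul_conj]
  simp [Complex.mul_re]

lemma Psi_mem_tanU_iff (t : (Fin n × Fin n) → ℝ) :
    Psi u t ∈ LinearMap.ker (tanU u) ↔ t ∈ LinearMap.ker (Tru u) := by
  rw [LinearMap.mem_ker, LinearMap.mem_ker, tanU_Psi, smul_eq_zero]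
  simp [Complex.I_ne_zero]

noncomputable def equivA (hne : ∀ k l, u k l ≠ 0) :
    ↥(LinearMap.ker (tanU u) ⊓ LinearMap.ker (tanMu u)) ≃ₗ[ℝ] ↥(LinearMap.ker (Tru u)) where
  toFun v := ⟨Phi u v.1, by
    have hmem := Submodule.mem_inf.mp v.2
    have h1 : Psi u (Phi u v.1) = v.1 := Psi_Phi u v.1 hne hmem.2
    exact (Psi_mem_tanU_iff u (Phi u v.1)).mp (by rw [h1]; exact hmem.1)⟩
  map_add' a b := Subtype.ext (by
    change Phi u ↑(a + b) = Phi u ↑a + Phi u ↑b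
    rw [Submodule.coe_add, map_add])
  map_smul' c a := Subtype.ext (by
    change Phi u ↑(c • a) = c • Phi u ↑a
    rw [Submodule.coe_smul, _root_.map_smul])
  invFun t := ⟨Psi u t.1, Submodule.mem_inf.mpr
    ⟨(Psi_mem_tanU_iff u t.1).mpr t.2, tanMu_Psi u t.1⟩⟩
  left_inv v := Subtype.ext (Psi_Phi u v.1 hne (Submodule.mem_inf.mp v.2).2)
  right_inv t := Subtype.ext (Phi_Psi u hne t.1)

lemma mem_re {f : (Fin n × Fin n) → ℂ} (hf : f ∈ LinearMap.ker (CL u - DL u)) :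
    (fun p => (f p).re) ∈ LinearMap.ker (Tru u) := by
  rw [mem_ker_Tru]
  have hf0 : (CL u - DL u) f = 0 := LinearMap.mem_ker.mp hf
  have hstar : (CL u - DL u) (fun p => (starRingEnd ℂ) (f p)) = 0 := by
    have := E_star u (f := f) (by simpa [E] using hf0)
    simpa [E] using this
  have hdecomp : (fun p => ((f p).re : ℂ))
      = (2:ℂ)⁻¹ • (f + fun p => (starRingEnd ℂ) (f p)) := by
    funext p
    simp only [Pi.smul_apply, Pi.add_apply, smul_eq_mul, Complex.add_conj]
    push_cast
    ring
  rw [hdecomp, _root_.map_smul, map_add, hf0, hstar]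
  simp

lemma mem_im {f : (Fin n × Fin n) → ℂ} (hf : f ∈ LinearMap.ker (CL u - DL u)) :
    (fun p => (f p).im) ∈ LinearMap.ker (Tru u) := by
  rw [mem_ker_Tru]
  have hf0 : (CL u - DL u) f = 0 := LinearMap.mem_ker.mp hf
  have hstar : (CL u - DL u) (fun p => (starRingEnd ℂ) (f p)) = 0 := by
    have := E_star u (f := f) (by simpa [E] using hf0)
    simpa [E] using this
  have hdecomp : (fun p => ((f p).im : ℂ))
      = (2 * Complex.I)⁻¹ • (f - fun p => (starRingEnd ℂ) (f p)) := by
    funext p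
    have h2I : (2 * Complex.I) ≠ 0 := by simp [Complex.I_ne_zero]
    simp only [Pi.smul_apply, Pi.sub_apply, smul_eq_mul, Complex.sub_conj]
    field_simp
    push_cast
    ring
  rw [hdecomp, _root_.map_smul, map_sub, hf0, hstar]
  simp

lemma mem_mk {s t : (Fin n × Fin n) → ℝ} (hs : s ∈ LinearMap.ker (Tru u))
    (ht : t ∈ LinearMap.ker (Tru u)) :
    (fun p => (s p : ℂ) + (t p : ℂ) * Complex.I) ∈ LinearMap.ker (CL u - DL u) := by
  rw [LinearMap.mem_ker]
  have hdecomp : (fun p => (s p : ℂ) + (t p : ℂ) * Complex.I)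
      = (fun p => (s p : ℂ)) + Complex.I • (fun p => (t p : ℂ)) := by
    funext p
    simp [mul_comm]
  rw [hdecomp, map_add, _root_.map_smul, (mem_ker_Tru u).mp hs, (mem_ker_Tru u).mp ht]
  simp

noncomputable def equivB :
    ↥(LinearMap.ker (CL u - DL u)) ≃ₗ[ℝ]
      ↥(LinearMap.ker (Tru u)) × ↥(LinearMap.ker (Tru u)) where
  toFun f := (⟨fun p => (f.1 p).re, mem_re u f.2⟩, ⟨fun p => (f.1 p).im, mem_im u f.2⟩)
  invFun s := ⟨fun p => (s.1.1 p : ℂ) + (s.2.1 p : ℂ) * Complex.I, mem_mk u s.1.2 s.2.2⟩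
  map_add' a b := by
    refine Prod.ext (Subtype.ext ?_) (Subtype.ext ?_) <;> funext p <;>
      simp [Submodule.coe_add]
  map_smul' c a := by
    refine Prod.ext (Subtype.ext ?_) (Subtype.ext ?_) <;> funext p <;>
      simp [Submodule.coe_smul_of_tower, Complex.smul_re, Complex.smul_im]
  left_inv f := Subtype.ext (by funext p; simp [Complex.re_add_im])
  right_inv s := by
    refine Prod.ext (Subtype.ext ?_) (Subtype.ext ?_) <;> funext p <;> simp

end Stmt18

/-- for a unitary matrix `u` with nonzero entries, the real dimension of the
kernel of the tangent map `μ_{*u}` (the space of tangent vectors `v` at `u` to the unitary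
group with `Re (v k l * conj (u k l)) = 0` for all `k, l`) equals the multiplicity of the
eigenvalue 1 of the Berezin transform `I_u`, i.e. the complex dimension of
`{f | C_u f = D_u f}`. -/
theorem stmt18 (n : ℕ) (hn : 1 ≤ n) (u : Matrix (Fin n) (Fin n) ℂ)
    (hu : u * uᴴ = 1) (hne : ∀ k l, u k l ≠ 0) :
    Module.finrank ℝ ↥(LinearMap.ker (tanU u) ⊓ LinearMap.ker (tanMu u)) =
      Module.finrank ℂ ↥(LinearMap.ker (CL u - DL u)) := by
  have e1 := (Stmt18.equivA u hne).finrank_eq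
  have e2 := (Stmt18.equivB u).finrank_eq
  rw [Module.finrank_prod] at e2
  have e3 : Module.finrank ℝ ↥(LinearMap.ker (CL u - DL u))
      = 2 * Module.finrank ℂ ↥(LinearMap.ker (CL u - DL u)) := by
    rw [← Module.finrank_mul_finrank ℝ ℂ ↥(LinearMap.ker (CL u - DL u)),
      Complex.finrank_real_complex]
  omega
end
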